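/- Let F be a field, θ ∈ F an element of multiplicative order at least m, and s ≥ 1. If z ∈ F^{m} (indexed by 0 ≤ j < m) has at most 2s nonzero entries and satisfies Σ_{j=0}^{m−1} z_j · θ^{i·j} = 0 for all 0 ≤ i < 2s, then z = 0. Consequently, two vectors in F^{m} each having at most s nonzero entries that agree on the 2s evaluations x ↦ Σ_j x_j θ^{i·j}, 0 ≤ i < 2s, are equal. -/
import Mathlib


/-- sparse-interpolation uniqueness. If `θ ∈ F` has multiplicative order
at least `m` (i.e. `θ^0,…,θ^{m−1}` are pairwise distinct), then a vector `z ∈ F^m` with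
at most `2s` nonzero entries whose `2s` Vandermonde evaluations
`∑_j z_j θ^{i·j}` (`0 ≤ i < 2s`) all vanish must be zero; consequently two vectors with
at most `s` nonzero entries each agreeing on these `2s` evaluations are equal. -/
theorem sparse_interpolation_uniqueness {F : Type*} [Field F] [DecidableEq F]
    {m s : ℕ} (hs : 1 ≤ s) (θ : F)
    (hθ : ∀ i j : ℕ, i < m → j < m → θ ^ i = θ ^ j → i = j) :
    (∀ z : Fin m → F,
        (Finset.univ.filter (fun j => z j ≠ 0)).card ≤ 2 * s →
        (∀ i : ℕ, i < 2 * s → ∑ j : Fin m, z j * θ ^ (i * (j : ℕ)) = 0) →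
        z = 0) ∧
    (∀ x y : Fin m → F,
        (Finset.univ.filter (fun j => x j ≠ 0)).card ≤ s →
        (Finset.univ.filter (fun j => y j ≠ 0)).card ≤ s →
        (∀ i : ℕ, i < 2 * s →
          ∑ j : Fin m, x j * θ ^ (i * (j : ℕ)) = ∑ j : Fin m, y j * θ ^ (i * (j : ℕ))) →
        x = y) := by
  have main : ∀ z : Fin m → F,
      (Finset.univ.filter (fun j => z j ≠ 0)).card ≤ 2 * s →
      (∀ i : ℕ, i < 2 * s → ∑ j : Fin m, z j * θ ^ (i * (j : ℕ)) = 0) →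
      z = 0 := by
    intro z hcard heval
    -- key lemma: for any polynomial of natDegree < 2s, the weighted sum of its
    -- evaluations at the nodes θ^j vanishes
    have key : ∀ p : Polynomial F, p.natDegree < 2 * s →
        ∑ j : Fin m, z j * p.eval (θ ^ (j : ℕ)) = 0 := by
      intro p hp
      have step : ∑ j : Fin m, z j * p.eval (θ ^ (j : ℕ))
          = ∑ i ∈ Finset.range (p.natDegree + 1),
              p.coeff i * ∑ j : Fin m, z j * θ ^ (i * (j : ℕ)) := by
        calc ∑ j : Fin m, z j * p.eval (θ ^ (j : ℕ))
            = ∑ j : Fin m, ∑ i ∈ Finset.range (p.natDegree + 1),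
                p.coeff i * (z j * θ ^ (i * (j : ℕ))) := by
              refine Finset.sum_congr rfl fun j _ => ?_
              rw [Polynomial.eval_eq_sum_range, Finset.mul_sum]
              refine Finset.sum_congr rfl fun i _ => ?_
              rw [← pow_mul, mul_comm (j : ℕ) i]
              ring
          _ = ∑ i ∈ Finset.range (p.natDegree + 1),
                ∑ j : Fin m, p.coeff i * (z j * θ ^ (i * (j : ℕ))) :=
              Finset.sum_comm
          _ = _ := by
              refine Finset.sum_congr rfl fun i _ => ?_
              rw [Finset.mul_sum]
      rw [step]
      refine Finset.sum_eq_zero fun i hi => ?_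
      have hi' : i < 2 * s := by
        have := Finset.mem_range.mp hi; omega
      rw [heval i hi', mul_zero]
    funext j0
    simp only [Pi.zero_apply]
    by_contra hz0
    set T : Finset (Fin m) := Finset.univ.filter (fun j => z j ≠ 0) with hT
    have hj0T : j0 ∈ T := by simp [hT, hz0]
    set L : Polynomial F :=
      ∏ k ∈ T.erase j0, (Polynomial.X - Polynomial.C (θ ^ (k : ℕ))) with hL
    have hdeg : L.natDegree < 2 * s := by
      have h1 : L.natDegree = (T.erase j0).card := by
        rw [hL, Polynomial.natDegree_prod _ _
          (fun k _ => Polynomial.X_sub_C_ne_zero _)]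
        simp only [Polynomial.natDegree_X_sub_C, Finset.sum_const, smul_eq_mul,
          mul_one]
      rw [h1]
      exact Nat.lt_of_lt_of_le (Finset.card_erase_lt_of_mem hj0T) hcard
    have hsum := key L hdeg
    have hsingle : ∑ j : Fin m, z j * L.eval (θ ^ (j : ℕ))
        = z j0 * L.eval (θ ^ (j0 : ℕ)) := by
      refine Finset.sum_eq_single j0 (fun j _ hj => ?_) (by simp)
      by_cases hzj : z j = 0
      · rw [hzj, zero_mul]
      · have hjT : j ∈ T.erase j0 := Finset.mem_erase.mpr ⟨hj, by simp [hT, hzj]⟩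
        have : L.eval (θ ^ (j : ℕ)) = 0 := by
          rw [hL, Polynomial.eval_prod]
          exact Finset.prod_eq_zero hjT (by simp)
        rw [this, mul_zero]
    have hLne : L.eval (θ ^ (j0 : ℕ)) ≠ 0 := by
      rw [hL, Polynomial.eval_prod]
      refine Finset.prod_ne_zero_iff.mpr fun k hk => ?_
      simp only [Polynomial.eval_sub, Polynomial.eval_X, Polynomial.eval_C]
      refine sub_ne_zero_of_ne fun hne => ?_
      have := hθ (j0 : ℕ) (k : ℕ) j0.isLt k.isLt hne
      exact (Finset.mem_erase.mp hk).1 (Fin.ext this.symm)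
    rw [hsingle] at hsum
    exact hz0 ((mul_eq_zero.mp hsum).resolve_right hLne)
  refine ⟨main, fun x y hx hy heq => ?_⟩
  have hsub : x - y = 0 := by
    apply main
    · calc (Finset.univ.filter (fun j => (x - y) j ≠ 0)).card
          ≤ ((Finset.univ.filter (fun j => x j ≠ 0)) ∪
             (Finset.univ.filter (fun j => y j ≠ 0))).card := by
            apply Finset.card_le_card
            intro j hj
            simp only [Finset.mem_filter, Finset.mem_union, Finset.mem_univ,
              true_and, Pi.sub_apply] at hj ⊢
            by_contra h
            push_neg at h
            rw [h.1, h.2, sub_zero] at hj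
            exact hj rfl
        _ ≤ _ := Finset.card_union_le _ _
        _ ≤ 2 * s := by omega
    · intro i hi
      have := heq i hi
      simp only [Pi.sub_apply, sub_mul, Finset.sum_sub_distrib]
      rw [this, sub_self]
  exact sub_eq_zero.mp hsub
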